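/- Let E and F be Banach lattices and let T : E → F be a surjective continuous lattice homomorphism. Then T is σ-uaw-continuous: for every norm-bounded uaw-null sequence (x_n) in E, the sequence (T x_n) is uaw-null in F. -/

import Mathlib

open Filter Topology

/-- A sequence in a Banach lattice is uaw-null if `|x n| ⊓ u` converges weakly to `0`
for every `u ≥ 0`. -/
def UawNullSeq {E : Type*} [NormedAddCommGroup E] [Lattice E] [IsOrderedAddMonoid E] [HasSolidNorm E] [NormedSpace ℝ E]
    (x : ℕ → E) : Prop :=
  ∀ u : E, 0 ≤ u → ∀ f : E →L[ℝ] ℝ,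
    Tendsto (fun n => f (|x n| ⊓ u)) atTop (𝓝 0)

/-- A sequence in a Banach lattice is un-null if `‖|y n| ⊓ v‖ → 0` for every `v ≥ 0`. -/
def UnNullSeq {F : Type*} [NormedAddCommGroup F] [Lattice F] [IsOrderedAddMonoid F] [HasSolidNorm F] [NormedSpace ℝ F]
    (y : ℕ → F) : Prop :=
  ∀ v : F, 0 ≤ v → Tendsto (fun n => ‖|y n| ⊓ v‖) atTop (𝓝 0)

/-- A sequence is weakly null if `f (x n) → 0` for every continuous linear functional `f`. -/
def WeaklyNullSeq {E : Type*} [NormedAddCommGroup E] [NormedSpace ℝ E]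
    (x : ℕ → E) : Prop :=
  ∀ f : E →L[ℝ] ℝ, Tendsto (fun n => f (x n)) atTop (𝓝 0)

/-- σ-unbounded Dunford-Pettis operator. -/
def SigmaUDP {E F : Type*} [NormedAddCommGroup E] [Lattice E] [IsOrderedAddMonoid E] [HasSolidNorm E] [NormedSpace ℝ E]
    [NormedAddCommGroup F] [Lattice F] [IsOrderedAddMonoid F] [HasSolidNorm F] [NormedSpace ℝ F] (T : E →L[ℝ] F) : Prop :=
  ∀ x : ℕ → E, (∃ C : ℝ, ∀ n, ‖x n‖ ≤ C) → UawNullSeq x → UnNullSeq fun n => T (x n)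

/-- Dunford-Pettis operator: maps weakly null sequences to norm null sequences. -/
def DunfordPettis {E F : Type*} [NormedAddCommGroup E] [NormedSpace ℝ E]
    [NormedAddCommGroup F] [NormedSpace ℝ F] (T : E →L[ℝ] F) : Prop :=
  ∀ x : ℕ → E, WeaklyNullSeq x → Tendsto (fun n => ‖T (x n)‖) atTop (𝓝 0)

/-- A net (indexed by a directed preorder) is uaw-null. -/
def UawNullNet {E : Type*} [NormedAddCommGroup E] [Lattice E] [IsOrderedAddMonoid E] [HasSolidNorm E] [NormedSpace ℝ E]
    {ι : Type} [Preorder ι] (x : ι → E) : Prop :=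
  ∀ u : E, 0 ≤ u → ∀ f : E →L[ℝ] ℝ,
    Tendsto (fun i => f (|x i| ⊓ u)) atTop (𝓝 0)

/-- A net (indexed by a directed preorder) is un-null. -/
def UnNullNet {F : Type*} [NormedAddCommGroup F] [Lattice F] [IsOrderedAddMonoid F] [HasSolidNorm F] [NormedSpace ℝ F]
    {ι : Type} [Preorder ι] (y : ι → F) : Prop :=
  ∀ v : F, 0 ≤ v → Tendsto (fun i => ‖|y i| ⊓ v‖) atTop (𝓝 0)

/-- Unbounded Dunford-Pettis operator: maps norm bounded uaw-null nets to un-null nets. -/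
def UDP {E F : Type*} [NormedAddCommGroup E] [Lattice E] [IsOrderedAddMonoid E] [HasSolidNorm E] [NormedSpace ℝ E]
    [NormedAddCommGroup F] [Lattice F] [IsOrderedAddMonoid F] [HasSolidNorm F] [NormedSpace ℝ F] (T : E →L[ℝ] F) : Prop :=
  ∀ (ι : Type) [Preorder ι] [IsDirected ι (· ≤ ·)] [Nonempty ι] (x : ι → E),
    (∃ C : ℝ, ∀ i, ‖x i‖ ≤ C) → UawNullNet x → UnNullNet fun i => T (x i)

/-- uaw-continuous operator: maps norm bounded uaw-null nets to uaw-null nets. -/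
def UawContinuous {E F : Type*} [NormedAddCommGroup E] [Lattice E] [IsOrderedAddMonoid E] [HasSolidNorm E] [NormedSpace ℝ E]
    [NormedAddCommGroup F] [Lattice F] [IsOrderedAddMonoid F] [HasSolidNorm F] [NormedSpace ℝ F] (T : E →L[ℝ] F) : Prop :=
  ∀ (ι : Type) [Preorder ι] [IsDirected ι (· ≤ ·)] [Nonempty ι] (x : ι → E),
    (∃ C : ℝ, ∀ i, ‖x i‖ ≤ C) → UawNullNet x → UawNullNet fun i => T (x i)

/-- A Banach lattice has order continuous norm if every decreasing net with infimum `0`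
converges to `0` in norm. -/
def OrderContinuousNorm (E : Type*) [NormedAddCommGroup E] [Lattice E] [IsOrderedAddMonoid E] [HasSolidNorm E] : Prop :=
  ∀ (ι : Type) [Preorder ι] [IsDirected ι (· ≤ ·)] [Nonempty ι] (x : ι → E),
    Antitone x → IsGLB (Set.range x) 0 → Tendsto (fun i => ‖x i‖) atTop (𝓝 0)

/-- The norm dual of `E` has order continuous norm. -/
def DualOrderContinuousNorm (E : Type*) [NormedAddCommGroup E] [Lattice E] [IsOrderedAddMonoid E] [HasSolidNorm E] [NormedSpace ℝ E] :
    Prop :=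
  ∀ (ι : Type) [Preorder ι] [IsDirected ι (· ≤ ·)] [Nonempty ι] (f : ι → E →L[ℝ] ℝ),
    (∀ i, ∀ x : E, 0 ≤ x → 0 ≤ f i x) →
    (∀ i j, i ≤ j → ∀ x : E, 0 ≤ x → f j x ≤ f i x) →
    (∀ x : E, 0 ≤ x → IsGLB (Set.range fun i => f i x) 0) →
    Tendsto (fun i => ‖f i‖) atTop (𝓝 0)

/-- Strong order unit. -/
def HasStrongOrderUnit (F : Type*) [NormedAddCommGroup F] [Lattice F] [IsOrderedAddMonoid F] [HasSolidNorm F] : Prop :=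
  ∃ e : F, 0 ≤ e ∧ ∀ y : F, ∃ n : ℕ, |y| ≤ n • e

/-- AM-space. -/
def IsAMSpace (E : Type*) [NormedAddCommGroup E] [Lattice E] [IsOrderedAddMonoid E] [HasSolidNorm E] : Prop :=
  ∀ x y : E, 0 ≤ x → 0 ≤ y → ‖x ⊔ y‖ = max ‖x‖ ‖y‖

/-- An atom of a Banach lattice. -/
def IsLatticeAtom {E : Type*} [NormedAddCommGroup E] [Lattice E] [IsOrderedAddMonoid E] [HasSolidNorm E] [NormedSpace ℝ E] (a : E) :
    Prop :=
  0 < a ∧ ∀ x : E, 0 ≤ x → x ≤ a → ∃ c : ℝ, x = c • a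

/-- An atomic Banach lattice: below every `x > 0` there is an atom. -/
def IsAtomicLattice (E : Type*) [NormedAddCommGroup E] [Lattice E] [IsOrderedAddMonoid E] [HasSolidNorm E] [NormedSpace ℝ E] : Prop :=
  ∀ x : E, 0 < x → ∃ a : E, IsLatticeAtom a ∧ a ≤ x

/-- Relatively sequentially un-compact set. -/
def RelSeqUnCompact {F : Type*} [NormedAddCommGroup F] [Lattice F] [IsOrderedAddMonoid F] [HasSolidNorm F] [NormedSpace ℝ F]
    (A : Set F) : Prop :=
  ∀ y : ℕ → F, (∀ n, y n ∈ A) →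
    ∃ (z : F) (φ : ℕ → ℕ), StrictMono φ ∧
      ∀ v : F, 0 ≤ v → Tendsto (fun k => ‖|y (φ k) - z| ⊓ v‖) atTop (𝓝 0)

/-- Sequentially un-compact operator. -/
def SeqUnCompactOp {E F : Type*} [NormedAddCommGroup E] [Lattice E] [IsOrderedAddMonoid E] [HasSolidNorm E] [NormedSpace ℝ E]
    [NormedAddCommGroup F] [Lattice F] [IsOrderedAddMonoid F] [HasSolidNorm F] [NormedSpace ℝ F] (S : E →L[ℝ] F) : Prop :=
  RelSeqUnCompact (S '' Metric.closedBall 0 1)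

/-- M-weakly compact operator. -/
def MWeaklyCompact {E F : Type*} [NormedAddCommGroup E] [Lattice E] [IsOrderedAddMonoid E] [HasSolidNorm E] [NormedSpace ℝ E]
    [NormedAddCommGroup F] [NormedSpace ℝ F] (T : E →L[ℝ] F) : Prop :=
  ∀ x : ℕ → E, (∃ C : ℝ, ∀ n, ‖x n‖ ≤ C) →
    (∀ i j, i ≠ j → |x i| ⊓ |x j| = 0) →
    Tendsto (fun n => ‖T (x n)‖) atTop (𝓝 0)

/-- L-weakly compact operator. -/
def LWeaklyCompact {E F : Type*} [NormedAddCommGroup E] [NormedSpace ℝ E]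
    [NormedAddCommGroup F] [Lattice F] [IsOrderedAddMonoid F] [HasSolidNorm F] [NormedSpace ℝ F] (T : E →L[ℝ] F) : Prop :=
  ∀ y : ℕ → F, (∀ n, ∃ a ∈ T '' Metric.closedBall 0 1, |y n| ≤ |a|) →
    (∀ i j, i ≠ j → |y i| ⊓ |y j| = 0) →
    Tendsto (fun n => ‖y n‖) atTop (𝓝 0)

/-- Relatively weakly compact subset of a normed space. -/
def RelWeaklyCompact {F : Type*} [NormedAddCommGroup F] [NormedSpace ℝ F] (S : Set F) :
    Prop :=
  IsCompact (closure ((toWeakSpace ℝ F) '' S))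

/-- weak Dunford-Pettis operator. -/
def WeakDunfordPettis {E F : Type*} [NormedAddCommGroup E] [NormedSpace ℝ E]
    [NormedAddCommGroup F] [NormedSpace ℝ F] (T : E →L[ℝ] F) : Prop :=
  ∀ x : ℕ → E, WeaklyNullSeq x →
    ∀ f : ℕ → (F →L[ℝ] ℝ),
      (∀ G : (F →L[ℝ] ℝ) →L[ℝ] ℝ, Tendsto (fun n => G (f n)) atTop (𝓝 0)) →
      Tendsto (fun n => f n (T (x n))) atTop (𝓝 0)

/-- Dedekind complete lattice. -/
def DedekindComplete (E : Type*) [Lattice E] : Prop :=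
  ∀ s : Set E, s.Nonempty → BddAbove s → ∃ a, IsLUB s a

/-- Dedekind σ-complete lattice. -/
def DedekindSigmaComplete (E : Type*) [Lattice E] : Prop :=
  ∀ s : Set E, s.Countable → s.Nonempty → BddAbove s → ∃ a, IsLUB s a

/-- a surjective continuous lattice homomorphism is σ-uaw-continuous. -/
theorem surjective_latticeHom_sigma_uaw_continuous
    {E F : Type*} [NormedAddCommGroup E] [Lattice E] [IsOrderedAddMonoid E] [HasSolidNorm E] [NormedSpace ℝ E] [CompleteSpace E]
    [NormedAddCommGroup F] [Lattice F] [IsOrderedAddMonoid F] [HasSolidNorm F] [NormedSpace ℝ F] [CompleteSpace F]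
    (T : E →L[ℝ] F) (hsurj : Function.Surjective T)
    (hhom : ∀ x y : E, T (x ⊔ y) = T x ⊔ T y) :
    ∀ x : ℕ → E, (∃ C : ℝ, ∀ n, ‖x n‖ ≤ C) → UawNullSeq x →
      UawNullSeq fun n => T (x n) := by
  intro x _ hx v hv f
  -- T preserves inf and abs
  have hinf : ∀ a b : E, T (a ⊓ b) = T a ⊓ T b := by
    intro a b
    have h1 : a ⊓ b = -((-a) ⊔ (-b)) := by rw [← neg_inf]; simp
    rw [h1, map_neg, hhom, neg_sup, map_neg, map_neg]
    simp
  have habs : ∀ a : E, T |a| = |T a| := by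
    intro a
    have h2 : |a| = a ⊔ -a :=
      le_antisymm (abs_le'.mpr ⟨le_sup_left, le_sup_right⟩)
        (sup_le (le_abs_self a) (neg_le_abs a))
    have h3 : |T a| = T a ⊔ -(T a) :=
      le_antisymm (abs_le'.mpr ⟨le_sup_left, le_sup_right⟩)
        (sup_le (le_abs_self _) (neg_le_abs _))
    rw [h2, hhom, map_neg, ← h3]
  obtain ⟨u, hu⟩ := hsurj v
  have hTw : T (u ⊔ 0) = v := by
    rw [hhom, hu, map_zero, sup_eq_left.mpr hv]
  have key : ∀ n, f (|T (x n)| ⊓ v) = (f.comp T) (|x n| ⊓ (u ⊔ 0)) := by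
    intro n
    simp only [ContinuousLinearMap.comp_apply, hinf, habs, hTw]
  simpa only [key] using hx (u ⊔ 0) le_sup_right (f.comp T)
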